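/- Let m ≥ 1, let φ_1, …, φ_m be real numbers with 0 < φ_k ≤ π for each k, let a_1, …, a_m be nonnegative reals, and let N ≥ 1 be a natural number. Then ∑_{k=1}^{m} a_k · |(1/N)∑_{l=0}^{N−1} e^{i φ_k l}|² ≤ (π²/(2N²)) · ∑_{k=1}^{m} a_k/(1 − cos(φ_k)). -/

import Mathlib

open Real Complex

theorem stmt_9 (m : ℕ) (hm : 1 ≤ m) (φ : Fin m → ℝ) (a : Fin m → ℝ)
    (hφpos : ∀ k, 0 < φ k) (hφle : ∀ k, φ k ≤ π) (ha : ∀ k, 0 ≤ a k)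
    (N : ℕ) (hN : 1 ≤ N) :
    ∑ k, a k *
        ‖(1 / (N : ℂ)) * ∑ l ∈ Finset.range N,
          Complex.exp (Complex.I * (φ k) * l)‖ ^ 2 ≤
      (π ^ 2 / (2 * N ^ 2)) * ∑ k, a k / (1 - Real.cos (φ k)) := by
  rw [Finset.mul_sum]
  refine Finset.sum_le_sum fun k _ => ?_
  set θ := φ k with hθ
  have h1 := hφpos k
  have h2 := hφle k
  have hc : Real.cos θ < 1 := by
    have := Real.cos_lt_cos_of_nonneg_of_le_pi le_rfl h2 h1
    simpa using this
  have hcpos : 0 < 1 - Real.cos θ := by linarith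
  set z : ℂ := Complex.exp (Complex.I * θ) with hz
  have hzform : z = Complex.cos θ + Complex.sin θ * Complex.I := by
    rw [hz, mul_comm, Complex.exp_mul_I]
  have hnsq : Complex.normSq (z - 1) = 2 * (1 - Real.cos θ) := by
    rw [hzform]
    simp [Complex.normSq_apply, Complex.cos_ofReal_re, Complex.sin_ofReal_re,
      Complex.add_re, Complex.add_im, Complex.mul_re, Complex.mul_im]
    have := Real.sin_sq_add_cos_sq θ
    ring_nf
    nlinarith [this]
  have hz1 : z ≠ 1 := by
    intro h
    rw [h] at hnsq
    simp at hnsq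
    linarith
  have habsz : ‖z‖ = 1 := by
    rw [hz, Complex.norm_exp]
    simp
  have hterm : ∀ l : ℕ, Complex.exp (Complex.I * θ * l) = z ^ l := by
    intro l
    rw [hz, ← Complex.exp_nat_mul]
    ring_nf
  have hsum : ∑ l ∈ Finset.range N, Complex.exp (Complex.I * θ * l)
      = (z ^ N - 1) / (z - 1) := by
    simp only [hterm]
    exact geom_sum_eq hz1 N
  have habssub : ‖z - 1‖ = Real.sqrt (2 * (1 - Real.cos θ)) := by
    rw [Complex.norm_def, hnsq]
  have habsbound : ‖(z ^ N - 1) / (z - 1)‖ ^ 2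
      ≤ 4 / (2 * (1 - Real.cos θ)) := by
    rw [norm_div, div_pow]
    have hnum : ‖z ^ N - 1‖ ≤ 2 := by
      calc ‖z ^ N - 1‖ ≤ ‖z ^ N‖ + ‖(1:ℂ)‖ :=
            (norm_sub_le _ _)
        _ = 2 := by rw [norm_pow, habsz]; norm_num
    have hden : ‖z - 1‖ ^ 2 = 2 * (1 - Real.cos θ) := by
      rw [Complex.sq_norm, hnsq]
    rw [hden]
    apply div_le_div_of_nonneg_right ?_ (by linarith)
    · nlinarith [norm_nonneg (z ^ N - 1)]
  have hNpos : (0:ℝ) < N := by exact_mod_cast hN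
  have habsprod : ‖(1 / (N : ℂ)) * ∑ l ∈ Finset.range N,
      Complex.exp (Complex.I * θ * l)‖ = (1 / N) * ‖(z ^ N - 1) / (z - 1)‖ := by
    rw [hsum, norm_mul, norm_div]
    simp [Complex.norm_natCast]
  rw [habsprod]
  have hπ : (3:ℝ) < π := Real.pi_gt_three
  have key : ((1 / (N:ℝ)) * ‖(z ^ N - 1) / (z - 1)‖) ^ 2
      ≤ 2 / ((N:ℝ) ^ 2 * (1 - Real.cos θ)) := by
    rw [mul_pow]
    calc (1 / (N:ℝ)) ^ 2 * ‖(z ^ N - 1) / (z - 1)‖ ^ 2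
        ≤ (1 / (N:ℝ)) ^ 2 * (4 / (2 * (1 - Real.cos θ))) := by
          apply mul_le_mul_of_nonneg_left habsbound (by positivity)
      _ = 2 / ((N:ℝ) ^ 2 * (1 - Real.cos θ)) := by
          field_simp; ring
  calc a k * ((1 / (N:ℝ)) * ‖(z ^ N - 1) / (z - 1)‖) ^ 2
      ≤ a k * (2 / ((N:ℝ) ^ 2 * (1 - Real.cos θ))) :=
        mul_le_mul_of_nonneg_left key (ha k)
    _ ≤ π ^ 2 / (2 * (N:ℝ) ^ 2) * (a k / (1 - Real.cos θ)) := by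
        have e1 : a k * (2 / ((N:ℝ) ^ 2 * (1 - Real.cos θ)))
            = 2 * (a k / ((N:ℝ) ^ 2 * (1 - Real.cos θ))) := by ring
        have e2 : π ^ 2 / (2 * (N:ℝ) ^ 2) * (a k / (1 - Real.cos θ))
            = (π ^ 2 / 2) * (a k / ((N:ℝ) ^ 2 * (1 - Real.cos θ))) := by
          have hN0 : ((N:ℝ)) ^ 2 ≠ 0 := by positivity
          have hc0 : (1 - Real.cos θ) ≠ 0 := ne_of_gt hcpos
          field_simp
        rw [e1, e2]
        exact mul_le_mul_of_nonneg_right (by nlinarith)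
          (div_nonneg (ha k) (by positivity))
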